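/- Let k > 1 and v ≠ 0. Define n*(C) = (k−1)v / ((k−3) + 2/C) and ℓ(C) = (k−1)(n*(C) − v)² − 2 n*(C)² + 2 n*(C)²/C for C ∈ (0, 1]. Then ℓ is twice differentiable on (0,1] with ℓ″(C) = 4(k−3)(k−1)²v² / ((k−3)C + 2)³; in particular, ℓ is strictly convex on (0,1] when k > 3 (diminishing returns to capacity) and strictly concave on (0,1] when 1 < k < 3 (increasing returns to capacity). -/

import Mathlib

/-- The optimal squared embedding length `n*(C) = (k-1)v / ((k-3) + 2/C)` for a single
feature of importance `v` at capacity `C`. -/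
noncomputable def nstar (k v C : ℝ) : ℝ := (k - 1) * v / ((k - 3) + 2 / C)

/-- The single-feature loss after minimizing over the squared embedding length:
`ℓ(C) = (k-1)(n*(C) - v)² - 2 n*(C)² + 2 n*(C)²/C`. -/
noncomputable def lossC (k v C : ℝ) : ℝ :=
  (k - 1) * (nstar k v C - v) ^ 2 - 2 * (nstar k v C) ^ 2 + 2 * (nstar k v C) ^ 2 / C

lemma closed_form (k v : ℝ) {C : ℝ} (hC : C ≠ 0) (hd : (k - 3) * C + 2 ≠ 0) :
    lossC k v C = 2 * (k - 1) * v ^ 2 * (1 - C) / ((k - 3) * C + 2) := by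
  have h2 : (k - 3) + 2 / C = ((k - 3) * C + 2) / C := by field_simp
  unfold lossC nstar
  rw [h2]
  field_simp
  ring

lemma g_hasDeriv (k v : ℝ) {C : ℝ} (hd : (k - 3) * C + 2 ≠ 0) :
    HasDerivAt (fun C => 2 * (k - 1) * v ^ 2 * (1 - C) / ((k - 3) * C + 2))
      (-2 * (k - 1) ^ 2 * v ^ 2 / ((k - 3) * C + 2) ^ 2) C := by
  have h1 : HasDerivAt (fun C : ℝ => 2 * (k - 1) * v ^ 2 * (1 - C))
      (-(2 * (k - 1) * v ^ 2)) C := by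
    simpa using ((hasDerivAt_const C (1:ℝ)).sub (hasDerivAt_id C)).const_mul
      (2 * (k - 1) * v ^ 2)
  have h2 : HasDerivAt (fun C : ℝ => (k - 3) * C + 2) (k - 3) C := by
    simpa using ((hasDerivAt_id C).const_mul (k - 3)).add_const 2
  have : HasDerivAt (fun C => 2 * (k - 1) * v ^ 2 * (1 - C) / ((k - 3) * C + 2)) _ C := h1.div h2 hd
  convert this using 1
  field_simp
  ring

lemma h_hasDeriv (k v : ℝ) {C : ℝ} (hd : (k - 3) * C + 2 ≠ 0) :
    HasDerivAt (fun C => -2 * (k - 1) ^ 2 * v ^ 2 / ((k - 3) * C + 2) ^ 2)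
      (4 * (k - 3) * (k - 1) ^ 2 * v ^ 2 / ((k - 3) * C + 2) ^ 3) C := by
  have hb : HasDerivAt (fun C : ℝ => (k - 3) * C + 2) (k - 3) C := by
    simpa using ((hasDerivAt_id C).const_mul (k - 3)).add_const 2
  have h2 : HasDerivAt (fun C : ℝ => ((k - 3) * C + 2) ^ 2)
      (2 * (k - 3) * ((k - 3) * C + 2)) C := by
    have : HasDerivAt (fun C : ℝ => ((k - 3) * C + 2) ^ 2) _ C := hb.pow 2
    convert this using 1
    ring
  have h1 : HasDerivAt (fun _ : ℝ => -2 * (k - 1) ^ 2 * v ^ 2)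
      (0 : ℝ) C := hasDerivAt_const _ _
  have : HasDerivAt (fun C => -2 * (k - 1) ^ 2 * v ^ 2 / ((k - 3) * C + 2) ^ 2) _ C := h1.div h2 (pow_ne_zero 2 hd)
  convert this using 1
  field_simp
  ring

/-- For `k > 1` and `v ≠ 0`, the minimized single-feature loss `ℓ` is twice
differentiable on `(0, 1]` with `ℓ''(C) = 4(k-3)(k-1)²v² / ((k-3)C + 2)³`; in particular
`ℓ` is strictly convex on `(0, 1]` when `k > 3` (diminishing returns) and strictly
concave there when `1 < k < 3` (increasing returns). -/
theorem lossC_second_deriv_and_convexity (k v : ℝ) (hk : 1 < k) (hv : v ≠ 0) :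
    (∀ C ∈ Set.Ioc (0 : ℝ) 1,
      HasDerivAt (deriv (lossC k v))
        (4 * (k - 3) * (k - 1) ^ 2 * v ^ 2 / ((k - 3) * C + 2) ^ 3) C) ∧
      (3 < k → StrictConvexOn ℝ (Set.Ioc (0 : ℝ) 1) (lossC k v)) ∧
      (k < 3 → StrictConcaveOn ℝ (Set.Ioc (0 : ℝ) 1) (lossC k v)) := by
  set U : Set ℝ := {C : ℝ | 0 < C ∧ 0 < (k - 3) * C + 2} with hU
  have hUopen : IsOpen U := by
    apply IsOpen.inter
    · exact isOpen_lt continuous_const continuous_id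
    · exact isOpen_lt continuous_const ((continuous_const.mul continuous_id).add continuous_const)
  have hsub : Set.Ioc (0:ℝ) 1 ⊆ U := by
    rintro C ⟨h0, h1⟩
    refine ⟨h0, ?_⟩
    rcases le_or_gt 3 k with h | h
    · nlinarith
    · nlinarith
  have hderiv1 : ∀ C ∈ U, deriv (lossC k v) C
      = -2 * (k - 1) ^ 2 * v ^ 2 / ((k - 3) * C + 2) ^ 2 := by
    intro C hC
    have heq : lossC k v =ᶠ[nhds C]
        fun C => 2 * (k - 1) * v ^ 2 * (1 - C) / ((k - 3) * C + 2) := by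
      filter_upwards [hUopen.mem_nhds hC] with x hx
      exact closed_form k v hx.1.ne' hx.2.ne'
    rw [heq.deriv_eq]
    exact (g_hasDeriv k v hC.2.ne').deriv
  have hsecond : ∀ C ∈ U, HasDerivAt (deriv (lossC k v))
      (4 * (k - 3) * (k - 1) ^ 2 * v ^ 2 / ((k - 3) * C + 2) ^ 3) C := by
    intro C hC
    have heq : deriv (lossC k v) =ᶠ[nhds C]
        fun C => -2 * (k - 1) ^ 2 * v ^ 2 / ((k - 3) * C + 2) ^ 2 := by
      filter_upwards [hUopen.mem_nhds hC] with x hx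
      exact hderiv1 x hx
    exact (h_hasDeriv k v hC.2.ne').congr_of_eventuallyEq heq
  have hcont : ContinuousOn (lossC k v) (Set.Ioc (0:ℝ) 1) := by
    have hg : ContinuousOn (fun C => 2 * (k - 1) * v ^ 2 * (1 - C) / ((k - 3) * C + 2))
        (Set.Ioc (0:ℝ) 1) := by
      apply ContinuousOn.div
      · fun_prop
      · fun_prop
      · intro x hx; exact ((hsub hx).2).ne'
    exact hg.congr fun x hx => closed_form k v (hsub hx).1.ne' (hsub hx).2.ne'
  have hd2 : ∀ x ∈ interior (Set.Ioc (0:ℝ) 1),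
      deriv^[2] (lossC k v) x = 4 * (k - 3) * (k - 1) ^ 2 * v ^ 2 / ((k - 3) * x + 2) ^ 3 := by
    intro x hx
    rw [interior_Ioc] at hx
    have hxU : x ∈ U := hsub ⟨hx.1, hx.2.le⟩
    have := (hsecond x hxU).deriv
    simpa [Function.iterate_succ_apply'] using this
  refine ⟨fun C hC => hsecond C (hsub hC), ?_, ?_⟩
  · intro h3
    apply strictConvexOn_of_deriv2_pos (convex_Ioc _ _) hcont
    intro x hx
    rw [hd2 x hx]
    rw [interior_Ioc] at hx
    have hden : 0 < (k - 3) * x + 2 := (hsub ⟨hx.1, hx.2.le⟩).2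
    have hv2 : (0:ℝ) < v ^ 2 := by positivity
    have hk2 : (0:ℝ) < (k - 1) ^ 2 := pow_pos (by linarith) 2
    apply div_pos _ (pow_pos hden 3)
    nlinarith [mul_pos (mul_pos (show (0:ℝ) < k - 3 by linarith) hk2) hv2]
  · intro h3
    apply strictConcaveOn_of_deriv2_neg (convex_Ioc _ _) hcont
    intro x hx
    rw [hd2 x hx]
    rw [interior_Ioc] at hx
    have hden : 0 < (k - 3) * x + 2 := (hsub ⟨hx.1, hx.2.le⟩).2
    have hv2 : (0:ℝ) < v ^ 2 := by positivity
    have hk2 : (0:ℝ) < (k - 1) ^ 2 := pow_pos (by linarith) 2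
    apply div_neg_of_neg_of_pos _ (pow_pos hden 3)
    nlinarith [mul_pos hk2 hv2]
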